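/- Let v, y, p, q be points in the Euclidean plane and let D' be the closed disk of center c' and radius r'. Suppose p and q lie on the boundary circle of D', v lies strictly outside D' (dist(v,c') > r'), y does not lie in the interior of D' (dist(y,c') ≥ r'), and the segments [v,y] and [p,q] cross. Then every closed disk having both v and y on its boundary circle contains at least one of p and q: for all centers c and radii r with dist(v,c) = r and dist(y,c) = r, one has dist(p,c) ≤ r or dist(q,c) ≤ r. -/

import Mathlib

/-- Two segments `[u,v]` and `[w,z]` in the plane *cross* if their four endpoints
are not all collinear and there is a point in the open segment of both. -/
def Crosses (u v w z : EuclideanSpace ℝ (Fin 2)) : Prop :=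
  ¬ Collinear ℝ ({u, v, w, z} : Set (EuclideanSpace ℝ (Fin 2))) ∧
    ∃ c, c ∈ openSegment ℝ u v ∧ c ∈ openSegment ℝ w z

theorem stmt_8 (v y p q c' : EuclideanSpace ℝ (Fin 2)) (r' : ℝ)
    (hp : p ∈ Metric.sphere c' r') (hq : q ∈ Metric.sphere c' r')
    (hv : dist v c' > r') (hy : dist y c' ≥ r')
    (hcross : Crosses v y p q) :
    ∀ (c : EuclideanSpace ℝ (Fin 2)) (r : ℝ),
      dist v c = r → dist y c = r → dist p c ≤ r ∨ dist q c ≤ r := by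
  intro c r hvc hyc
  obtain ⟨-, z, hz1, hz2⟩ := hcross
  simp only [Metric.mem_sphere] at hp hq
  set f : EuclideanSpace ℝ (Fin 2) → ℝ :=
    fun x => 2 * (inner ℝ x (c' - c) : ℝ) + (‖c‖ ^ 2 - r ^ 2 - ‖c'‖ ^ 2 + r' ^ 2) with hf
  have key : ∀ x : EuclideanSpace ℝ (Fin 2),
      dist x c ^ 2 - r ^ 2 - (dist x c' ^ 2 - r' ^ 2) = f x := by
    intro x
    simp only [hf, dist_eq_norm, norm_sub_sq_real, inner_sub_right]
    ring
  have haff : ∀ (a b : ℝ) (u w : EuclideanSpace ℝ (Fin 2)), a + b = 1 →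
      f (a • u + b • w) = a * f u + b * f w := by
    intro a b u w hab
    simp only [hf, inner_add_left, real_inner_smul_left]
    nlinarith [hab]
  have hr'0 : 0 ≤ r' := hp ▸ dist_nonneg
  have hfv : f v < 0 := by
    have := key v
    rw [hvc] at this
    nlinarith [this]
  have hfy : f y ≤ 0 := by
    have := key y
    rw [hyc] at this
    nlinarith [this, dist_nonneg (x := y) (y := c')]
  obtain ⟨a, b, ha, hb, hab, hz⟩ := hz1
  have hfz : f z < 0 := by
    rw [← hz, haff a b v y hab]
    nlinarith
  obtain ⟨a', b', ha', hb', hab', hz'⟩ := hz2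
  rw [← hz', haff a' b' p q hab'] at hfz
  have hfp : f p = dist p c ^ 2 - r ^ 2 := by rw [← key p, hp]; ring
  have hfq : f q = dist q c ^ 2 - r ^ 2 := by rw [← key q, hq]; ring
  have hr0 : 0 ≤ r := hvc ▸ dist_nonneg
  by_cases h : f p < 0
  · left
    rw [hfp] at h
    nlinarith [dist_nonneg (x := p) (y := c)]
  · right
    have : f q < 0 := by push_neg at h; nlinarith
    rw [hfq] at this
    nlinarith [dist_nonneg (x := q) (y := c)]
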